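/- Consider a finite MDP with nonempty finite state set S, nonempty finite action set A, discount γ ∈ [0,1), true transition probabilities p and true reward r with 0 ≤ r(s,a) ≤ r_max for all (s,a), and an approximate (MLE) model with transition probabilities p̂ and reward r̂ (both p(·|s,a) and p̂(·|s,a) are probability distributions on S for every (s,a)). Let B and B̂ be the hard Bellman optimality operators induced by (p, r) and (p̂, r̂) respectively. Let Q* satisfy Q* = BQ* and let Q̂ satisfy Q̂ = B̂Q̂, and assume 0 ≤ Q̂(s,a) ≤ r_max/(1−γ) for all (s,a). If max_{s,a} Σ_{s'} |p(s'|s,a) − p̂(s'|s,a)| ≤ ε_p and max_{s,a} |r(s,a) − r̂(s,a)| ≤ ε_r, then max_{s,a} |Q*(s,a) − Q̂(s,a)| ≤ ε_r/(1−γ) + γ · ε_p · r_max / (2(1−γ)²). -/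

import Mathlib

lemma sup'_abs_sub_le {ι : Type*} (s : Finset ι) (hs : s.Nonempty) (f g : ι → ℝ) :
    |s.sup' hs f - s.sup' hs g| ≤ s.sup' hs (fun i => |f i - g i|) := by
  rw [abs_sub_le_iff]
  constructor
  · rw [sub_le_iff_le_add]
    apply Finset.sup'_le
    intro i hi
    calc f i ≤ |f i - g i| + g i := by
          have := abs_nonneg (f i - g i); have := le_abs_self (f i - g i); linarith
      _ ≤ s.sup' hs (fun i => |f i - g i|) + s.sup' hs g :=
          add_le_add (Finset.le_sup' (fun i => |f i - g i|) hi) (Finset.le_sup' g hi)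
  · rw [sub_le_iff_le_add]
    apply Finset.sup'_le
    intro i hi
    calc g i ≤ |f i - g i| + f i := by
          have := neg_abs_le (f i - g i); linarith
      _ ≤ s.sup' hs (fun i => |f i - g i|) + s.sup' hs f :=
          add_le_add (Finset.le_sup' (fun i => |f i - g i|) hi) (Finset.le_sup' f hi)

/-- The hard Bellman optimality operator induced by a finite MDP model `(p, r, γ)`. -/
noncomputable def hardBellman {S A : Type*} [Fintype S] [Fintype A] [Nonempty A]
    (p : S → A → S → ℝ) (r : S → A → ℝ) (γ : ℝ) (Q : S × A → ℝ) : S × A → ℝ :=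
  fun sa =>
    r sa.1 sa.2 +
      γ * ∑ s' : S, p sa.1 sa.2 s' *
        Finset.univ.sup' Finset.univ_nonempty (fun a' : A => Q (s', a'))

theorem qstar_error_mle {S A : Type*} [Fintype S] [Fintype A]
    [Nonempty S] [Nonempty A]
    (p phat : S → A → S → ℝ) (r rhat : S → A → ℝ) (γ rmax εp εr : ℝ)
    (hp : ∀ s a s', 0 ≤ p s a s') (hpsum : ∀ s a, ∑ s' : S, p s a s' = 1)
    (hphat : ∀ s a s', 0 ≤ phat s a s') (hphatsum : ∀ s a, ∑ s' : S, phat s a s' = 1)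
    (hr0 : ∀ s a, 0 ≤ r s a) (hrmax : ∀ s a, r s a ≤ rmax)
    (hγ0 : 0 ≤ γ) (hγ1 : γ < 1)
    (hεp : ∀ s a, ∑ s' : S, |p s a s' - phat s a s'| ≤ εp)
    (hεr : ∀ s a, |r s a - rhat s a| ≤ εr)
    (Qstar Qhat : S × A → ℝ)
    (hQstar : ∀ sa : S × A, Qstar sa = hardBellman p r γ Qstar sa)
    (hQhat : ∀ sa : S × A, Qhat sa = hardBellman phat rhat γ Qhat sa)
    (hQhat0 : ∀ sa : S × A, 0 ≤ Qhat sa)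
    (hQhatub : ∀ sa : S × A, Qhat sa ≤ rmax / (1 - γ)) :
    Finset.univ.sup' Finset.univ_nonempty
        (fun sa : S × A => |Qstar sa - Qhat sa|)
      ≤ εr / (1 - γ) + γ * εp * rmax / (2 * (1 - γ) ^ 2) := by
  have h1γ : (0:ℝ) < 1 - γ := by linarith
  obtain ⟨s0⟩ := ‹Nonempty S›
  obtain ⟨a0⟩ := ‹Nonempty A›
  have hrmax0 : 0 ≤ rmax := le_trans (hr0 s0 a0) (hrmax s0 a0)
  have hεp0 : 0 ≤ εp := le_trans (Finset.sum_nonneg fun _ _ => abs_nonneg _) (hεp s0 a0)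
  have hεr0 : 0 ≤ εr := le_trans (abs_nonneg _) (hεr s0 a0)
  set c : ℝ := rmax / (2 * (1 - γ)) with hc
  have hc0 : 0 ≤ c := by positivity
  set D : ℝ := Finset.univ.sup' Finset.univ_nonempty
      (fun sa : S × A => |Qstar sa - Qhat sa|) with hD
  have hD0 : 0 ≤ D :=
    le_trans (abs_nonneg _) (Finset.le_sup' (fun sa : S × A => |Qstar sa - Qhat sa|)
      (Finset.mem_univ (s0, a0)))
  set Vs : S → ℝ := fun s' => Finset.univ.sup' Finset.univ_nonempty
      (fun a' : A => Qstar (s', a')) with hVs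
  set Vh : S → ℝ := fun s' => Finset.univ.sup' Finset.univ_nonempty
      (fun a' : A => Qhat (s', a')) with hVh
  have hVdiff : ∀ s', |Vs s' - Vh s'| ≤ D := by
    intro s'
    refine le_trans (sup'_abs_sub_le _ _ _ _) (Finset.sup'_le _ _ ?_)
    intro a' _
    exact Finset.le_sup' (fun sa : S × A => |Qstar sa - Qhat sa|) (Finset.mem_univ (s', a'))
  have hVhb : ∀ s', |Vh s' - c| ≤ c := by
    intro s'
    rw [abs_le]
    constructor
    · have : 0 ≤ Vh s' := by
        simp only [hVh]
        exact le_trans (hQhat0 (s', a0)) (Finset.le_sup' (fun a' : A => Qhat (s', a'))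
          (Finset.mem_univ a0))
      linarith
    · have h2c : c + c = rmax / (1 - γ) := by rw [hc]; field_simp; ring
      have : Vh s' ≤ rmax / (1 - γ) :=
        Finset.sup'_le _ _ fun a' _ => hQhatub (s', a')
      linarith
  have key : ∀ sa : S × A, |Qstar sa - Qhat sa| ≤ εr + γ * εp * c + γ * D := by
    rintro ⟨s, a⟩
    have e1 : Qstar (s, a) = r s a + γ * ∑ s' : S, p s a s' * Vs s' := hQstar (s, a)
    have e2 : Qhat (s, a) = rhat s a + γ * ∑ s' : S, phat s a s' * Vh s' := hQhat (s, a)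
    have expand : (∑ s' : S, p s a s' * Vs s') - (∑ s' : S, phat s a s' * Vh s')
        = (∑ s' : S, p s a s' * (Vs s' - Vh s'))
          + (∑ s' : S, (p s a s' - phat s a s') * (Vh s' - c)) := by
      have hterm : ∀ s' : S, p s a s' * (Vs s' - Vh s') + (p s a s' - phat s a s') * (Vh s' - c)
          = (p s a s' * Vs s' - phat s a s' * Vh s') - c * (p s a s' - phat s a s') := by
        intro s'; ring
      rw [← Finset.sum_add_distrib]
      simp_rw [hterm]
      rw [Finset.sum_sub_distrib, Finset.sum_sub_distrib, ← Finset.mul_sum,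
        Finset.sum_sub_distrib, hpsum, hphatsum]
      ring
    have hT1 : |∑ s' : S, p s a s' * (Vs s' - Vh s')| ≤ D := by
      calc |∑ s' : S, p s a s' * (Vs s' - Vh s')|
          ≤ ∑ s' : S, |p s a s' * (Vs s' - Vh s')| := Finset.abs_sum_le_sum_abs _ _
        _ ≤ ∑ s' : S, p s a s' * D := by
            apply Finset.sum_le_sum
            intro s' _
            rw [abs_mul, abs_of_nonneg (hp s a s')]
            exact mul_le_mul_of_nonneg_left (hVdiff s') (hp s a s')
        _ = D := by rw [← Finset.sum_mul, hpsum, one_mul]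
    have hT2 : |∑ s' : S, (p s a s' - phat s a s') * (Vh s' - c)| ≤ εp * c := by
      calc |∑ s' : S, (p s a s' - phat s a s') * (Vh s' - c)|
          ≤ ∑ s' : S, |(p s a s' - phat s a s') * (Vh s' - c)| := Finset.abs_sum_le_sum_abs _ _
        _ ≤ ∑ s' : S, |p s a s' - phat s a s'| * c := by
            apply Finset.sum_le_sum
            intro s' _
            rw [abs_mul]
            exact mul_le_mul_of_nonneg_left (hVhb s') (abs_nonneg _)
        _ = (∑ s' : S, |p s a s' - phat s a s'|) * c := (Finset.sum_mul _ _ _).symm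
        _ ≤ εp * c := mul_le_mul_of_nonneg_right (hεp s a) hc0
    calc |Qstar (s, a) - Qhat (s, a)|
        = |(r s a - rhat s a) + γ * ((∑ s' : S, p s a s' * (Vs s' - Vh s'))
            + (∑ s' : S, (p s a s' - phat s a s') * (Vh s' - c)))| := by
          rw [e1, e2, ← expand]; ring_nf
      _ ≤ |r s a - rhat s a| + γ * (|∑ s' : S, p s a s' * (Vs s' - Vh s')|
            + |∑ s' : S, (p s a s' - phat s a s') * (Vh s' - c)|) := by
          refine le_trans (abs_add_le _ _) ?_
          gcongr
          rw [abs_mul, abs_of_nonneg hγ0]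
          exact mul_le_mul_of_nonneg_left (abs_add_le _ _) hγ0
      _ ≤ εr + γ * εp * c + γ * D := by
          have := hεr s a
          nlinarith [mul_le_mul_of_nonneg_left (add_le_add hT1 hT2) hγ0]
  have hDle : D ≤ εr + γ * εp * c + γ * D :=
    Finset.sup'_le _ _ fun sa _ => key sa
  have hfinal : εr / (1 - γ) + γ * εp * rmax / (2 * (1 - γ) ^ 2)
      = (εr + γ * εp * c) / (1 - γ) := by
    rw [hc]; field_simp
  rw [hfinal, le_div_iff₀ h1γ]
  nlinarith
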